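/- With residual characteristic of F odd, for each k ≥ 1 the classical Cayley map X ↦ (1−X)(1+X)^{-1} restricts to a bijection from ϖ^k 𝓛̈ onto (1 + ϖ^k 𝓛̂) ∩ U(V), where 𝓛̈ = 𝓛̂ ∩ u(V). -/

import Mathlib

open Polynomial

lemma aux_integral {O E V : Type*} [CommRing O] [Field E] [AddCommGroup V] [Module E V]
    [Algebra O E] [Module O V] [IsScalarTower O E V]
    (M : Submodule O V) [Module.Finite O M]
    (A : V →ₗ[E] V) (hAM : ∀ x ∈ M, A x ∈ M) :
    ∃ p : Polynomial O, p.Monic ∧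
      (∀ x ∈ M, Polynomial.aeval A (p.map (algebraMap O E)) x = 0) := by
  have hAM' : ∀ x ∈ M, (A.restrictScalars O) x ∈ M := hAM
  set A' : M →ₗ[O] M := (A.restrictScalars O).restrict hAM' with hA'def
  obtain ⟨p, hpmonic, hp0⟩ := (Module.End.isIntegral (R := O) (M := M)).isIntegral A'
  have hp0' : Polynomial.aeval A' p = 0 := by rwa [Polynomial.aeval_def]
  have key : ∀ (r : Polynomial O) (m : M),
      ((Polynomial.aeval A') r m : V) = (Polynomial.aeval A) (r.map (algebraMap O E)) (m : V) := by
    intro r m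
    induction r using Polynomial.induction_on' with
    | add f g hf hg =>
      simp [map_add, LinearMap.add_apply, hf, hg]
    | monomial n a =>
      have hpow : ∀ n : ℕ, ((A' ^ n) m : V) = (A ^ n) (m : V) := by
        intro n
        induction n with
        | zero => simp
        | succ n ih =>
          rw [pow_succ', pow_succ']
          simp only [Module.End.mul_apply]
          have h1 : ((A' ((A' ^ n) m)) : V) = A (((A' ^ n) m : M) : V) := by
            simp [hA'def, LinearMap.restrict_apply]
          rw [h1, ih]
      simp only [Polynomial.aeval_monomial, Polynomial.map_monomial]
      simp only [Module.End.mul_apply, Module.algebraMap_end_apply]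
      rw [Submodule.coe_smul, hpow, algebraMap_smul]
  refine ⟨p, hpmonic, ?_⟩
  intro x hx
  have := key p ⟨x, hx⟩
  rw [hp0'] at this
  simpa using this.symm

lemma exists_inverse {E V Γ₁ : Type*} [Field E] [AddCommGroup V] [Module E V]
    [LinearOrderedCommGroupWithZero Γ₁] (w : Valuation E Γ₁)
    (L : AddSubgroup V)
    (hLsmul : ∀ c : E, w c ≤ 1 → ∀ x ∈ L, c • x ∈ L)
    (hLspan : Submodule.span E (L : Set V) = ⊤)
    (s : Finset V) (hsL : ∀ x ∈ s, x ∈ L)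
    (hLfg : ∀ x ∈ L, ∃ c : V → E, (∀ i ∈ s, w (c i) ≤ 1) ∧ x = ∑ i ∈ s, c i • i)
    (A : V →ₗ[E] V) (hA : ∀ x ∈ L, A x ∈ L)
    (c : E) (hc1 : w c < 1) :
    ∃ G : V →ₗ[E] V, (1 + c • A) * G = 1 ∧ G * (1 + c • A) = 1 ∧ ∀ x ∈ L, G x ∈ L := by
  classical
  set O := w.integer with hO
  letI : Module O V := Module.compHom V (algebraMap O E)
  haveI : IsScalarTower O E V := IsScalarTower.of_algebraMap_smul (fun a v => rfl)
  set M : Submodule O V := Submodule.span O (s : Set V) with hM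
  have hML : ∀ x : V, x ∈ M ↔ x ∈ L := by
    intro x
    constructor
    · intro hx
      refine Submodule.span_induction (p := fun x _ => x ∈ L) ?_ ?_ ?_ ?_ hx
      · exact fun y hy => hsL y hy
      · exact L.zero_mem
      · exact fun a b _ _ ha hb => L.add_mem ha hb
      · intro a x _ hx
        have : (a : E) • x ∈ L := hLsmul a a.2 x hx
        exact this
    · intro hx
      obtain ⟨cf, hcf, hxe⟩ := hLfg x hx
      rw [hxe]
      refine Submodule.sum_mem _ (fun i hi => ?_)
      have : cf i • i = (⟨cf i, hcf i hi⟩ : O) • i := rfl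
      rw [this]
      exact Submodule.smul_mem _ _ (Submodule.subset_span hi)
  haveI : Module.Finite O M := Module.Finite.span_of_finite O s.finite_toSet
  obtain ⟨p, hpm, hp0⟩ := aux_integral M A (fun x hx => (hML _).2 (hA x ((hML x).1 hx)))
  set q : Polynomial E := p.map (algebraMap O E) with hq
  have hqm : q.Monic := hpm.map _
  have hq0 : Polynomial.aeval A q = 0 := by
    apply LinearMap.ext_on hLspan
    intro x hx
    rw [hp0 x ((hML x).2 hx)]
    simp
  have hqc : ∀ i, w (q.coeff i) ≤ 1 := by
    intro i
    rw [hq, Polynomial.coeff_map]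
    exact (p.coeff i).2
  have hcO : c ∈ O := le_of_lt hc1
  set n := q.natDegree with hn
  set q₁ : Polynomial E := q.scaleRoots c with hq₁
  have hq₁0 : Polynomial.aeval (c • A) q₁ = 0 := by
    have := Polynomial.scaleRoots_aeval_eq_zero (r := c) hq0
    rwa [← Algebra.smul_def] at this
  have hq₁m : q₁.Monic := (Polynomial.monic_scaleRoots_iff c).mpr hqm
  have hdeg : q₁.natDegree = n := Polynomial.natDegree_scaleRoots q c
  set u : V →ₗ[E] V := 1 + c • A with hu
  set T : Polynomial E := q₁.comp (X - C 1) with hT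
  have hT0 : Polynomial.aeval u T = 0 := by
    rw [hT, Polynomial.aeval_comp]
    have h2 : Polynomial.aeval u ((X - C 1 : Polynomial E)) = c • A := by
      rw [map_sub, Polynomial.aeval_X, Polynomial.aeval_C, map_one, hu]
      abel
    rw [h2, hq₁0]
  have hTmap : T = ((p.scaleRoots ⟨c, hcO⟩).comp (X - C 1)).map (algebraMap O E) := by
    have hval : (algebraMap O E) (⟨c, hcO⟩ : O) = c := rfl
    rw [Polynomial.map_comp, Polynomial.map_scaleRoots _ _ _ (by simp [hpm.leadingCoeff]),
      hval, Polynomial.map_sub, Polynomial.map_X, Polynomial.map_C, map_one, hT, hq₁, hq]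
  have hTc : ∀ i, w (T.coeff i) ≤ 1 := by
    intro i
    rw [hTmap, Polynomial.coeff_map]
    exact (((p.scaleRoots ⟨c, hcO⟩).comp (X - C 1)).coeff i).2
  set e : E := T.coeff 0 with he
  have hTe : e = q₁.eval (-1) := by
    rw [he, Polynomial.coeff_zero_eq_eval_zero, hT, Polynomial.eval_comp]
    simp
  have hwe : w e = 1 := by
    rw [hTe, Polynomial.eval_eq_sum_range, hdeg, Finset.sum_range_succ]
    have hlead : q₁.coeff n * (-1 : E) ^ n = (-1 : E) ^ n := by
      rw [← hdeg, Polynomial.coeff_natDegree, hq₁m.leadingCoeff, one_mul]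
    rw [hlead]
    have hsmall : w (∑ i ∈ Finset.range n, q₁.coeff i * (-1 : E) ^ i) < 1 := by
      apply Valuation.map_sum_lt _ one_ne_zero
      intro i hi
      rw [Finset.mem_range] at hi
      rw [Valuation.map_mul, map_pow, Valuation.map_neg, map_one, one_pow, mul_one]
      rw [hq₁, Polynomial.coeff_scaleRoots, ← hn, Valuation.map_mul, map_pow]
      calc w (q.coeff i) * w c ^ (n - i)
          ≤ 1 * w c ^ (n - i) := mul_le_mul_left (hqc i) _
        _ = w c ^ (n - i) := one_mul _
        _ ≤ w c ^ 1 := by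
            apply pow_le_pow_right_of_le_one' (le_of_lt hc1)
            omega
        _ = w c := pow_one _
        _ < 1 := hc1
    have hne : w (∑ i ∈ Finset.range n, q₁.coeff i * (-1 : E) ^ i) ≠ w ((-1 : E) ^ n) := by
      rw [map_pow, Valuation.map_neg, map_one, one_pow]
      exact ne_of_lt hsmall
    rw [Valuation.map_add_of_distinct_val _ hne]
    rw [map_pow, Valuation.map_neg, map_one, one_pow]
    exact max_eq_right (le_of_lt hsmall)
  have he0 : e ≠ 0 := by
    intro h
    rw [h, Valuation.map_zero] at hwe
    exact zero_ne_one hwe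
  set G₀ : V →ₗ[E] V := Polynomial.aeval u T.divX with hG₀
  have h1 : u * G₀ = -(e • 1) := by
    have h2 := congrArg (Polynomial.aeval u) (Polynomial.X_mul_divX_add T)
    rw [hT0, map_add, map_mul, Polynomial.aeval_X, Polynomial.aeval_C,
      Algebra.algebraMap_eq_smul_one] at h2
    rw [eq_neg_iff_add_eq_zero]
    exact h2
  set G : V →ₗ[E] V := (-e⁻¹) • G₀ with hG
  have hcomm : G₀ * u = u * G₀ := by
    calc G₀ * u = Polynomial.aeval u T.divX * Polynomial.aeval u X := by
          rw [Polynomial.aeval_X]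
      _ = Polynomial.aeval u (T.divX * X) := (map_mul _ _ _).symm
      _ = Polynomial.aeval u (X * T.divX) := by rw [mul_comm]
      _ = u * G₀ := by rw [map_mul, Polynomial.aeval_X]
  have hGu : u * G = 1 := by
    rw [hG, mul_smul_comm, h1, smul_neg, neg_smul, neg_neg, smul_smul,
      inv_mul_cancel₀ he0, one_smul]
  have hGu' : G * u = 1 := by
    rw [hG, smul_mul_assoc, hcomm, h1, smul_neg, neg_smul, neg_neg, smul_smul,
      inv_mul_cancel₀ he0, one_smul]
  have huL : ∀ x ∈ L, u x ∈ L := by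
    intro x hx
    have : u x = x + c • A x := by
      simp [hu, LinearMap.add_apply, LinearMap.smul_apply]
    rw [this]
    exact L.add_mem hx (hLsmul c (le_of_lt hc1) _ (hA x hx))
  have hupow : ∀ (m : ℕ), ∀ x ∈ L, (u ^ m) x ∈ L := by
    intro m
    induction m with
    | zero => intro x hx; simpa using hx
    | succ m ih =>
      intro x hx
      rw [pow_succ', Module.End.mul_apply]
      exact huL _ (ih x hx)
  have hG₀L : ∀ x ∈ L, G₀ x ∈ L := by
    intro x hx
    rw [hG₀, Polynomial.aeval_eq_sum_range]
    rw [LinearMap.sum_apply]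
    refine AddSubgroup.sum_mem L (fun i _ => ?_)
    rw [LinearMap.smul_apply]
    have hco : w (T.divX.coeff i) ≤ 1 := by
      rw [Polynomial.coeff_divX]
      exact hTc (i + 1)
    exact hLsmul _ hco _ (hupow i x hx)
  refine ⟨G, hGu, hGu', ?_⟩
  intro x hx
  rw [hG, LinearMap.smul_apply]
  have hwi : w (-e⁻¹) ≤ 1 := by
    rw [Valuation.map_neg, map_inv₀, hwe, inv_one]
  exact hLsmul _ hwi _ (hG₀L x hx)



/- STATEMENT 11: With F of odd residual characteristic (v 2 = 1), ϖ a
uniformizer, L an o_E-lattice in V, 𝓛̂ = {a : a(L) ⊆ L}, 𝓛̈ = 𝓛̂ ∩ u(V)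
(where u(V) = {X : ⟨Xu,u'⟩ + ⟨u,Xu'⟩ = 0}), and k ≥ 1, the classical Cayley
map X ↦ (1−X)(1+X)⁻¹ restricts to a bijection from ϖ^k 𝓛̈ onto
(1 + ϖ^k 𝓛̂) ∩ U(V). -/
theorem classical_cayley_bijection_on_lattice
    {F E V Γ₀ Γ₁ : Type*} [Field F] [Field E] [Algebra F E]
    [AddCommGroup V] [Module E V] [FiniteDimensional E V] [Nontrivial V]
    [LinearOrderedCommGroupWithZero Γ₀] [LinearOrderedCommGroupWithZero Γ₁]
    (hFE : Module.finrank F E ≤ 2)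
    (v : Valuation F Γ₀) (w : Valuation E Γ₁)
    (hcompat : ∀ x : F, w (algebraMap F E x) ≤ 1 ↔ v x ≤ 1)
    (hodd : v (2 : F) = 1)
    (ϖ : F) (hϖ0 : ϖ ≠ 0) (hϖ1 : v ϖ < 1) (hϖ2 : ∀ x : F, v x < 1 → v x ≤ v ϖ)
    (τ : E →+* E) (hτ : ∀ a : E, τ (τ a) = a) (hτw : ∀ a : E, w (τ a) = w a)
    (hτF : ∀ x : F, τ (algebraMap F E x) = algebraMap F E x)
    (ε : E) (hε : ε = 1 ∨ ε = -1)
    (B : V → V → E)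
    (haddl : ∀ u u' u'' : V, B (u + u') u'' = B u u'' + B u' u'')
    (hsmull : ∀ (c : E) (u u' : V), B (c • u) u' = c * B u u')
    (hherm : ∀ u u' : V, B u u' = ε * τ (B u' u))
    (hnd : ∀ u : V, (∀ u' : V, B u u' = 0) → u = 0)
    (L : AddSubgroup V)
    (hLsmul : ∀ c : E, w c ≤ 1 → ∀ x ∈ L, c • x ∈ L)
    (hLspan : Submodule.span E (L : Set V) = ⊤)
    (s : Finset V) (hsL : ∀ x ∈ s, x ∈ L)
    (hLfg : ∀ x ∈ L, ∃ c : V → E, (∀ i ∈ s, w (c i) ≤ 1) ∧ x = ∑ i ∈ s, c i • i)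
    (k : ℕ) (hk : 1 ≤ k) :
    Set.BijOn
      (fun X : V →ₗ[E] V => (1 - X) * Ring.inverse (1 + X))
      -- the set ϖ^k 𝓛̈ :
      {X : V →ₗ[E] V | ∃ Y : V →ₗ[E] V,
        (∀ x ∈ L, Y x ∈ L) ∧
        (∀ u u' : V, B (Y u) u' + B u (Y u') = 0) ∧
        X = (algebraMap F E (ϖ ^ k)) • Y}
      -- the set (1 + ϖ^k 𝓛̂) ∩ U(V) :
      {g : V →ₗ[E] V |
        (∃ Z : V →ₗ[E] V, (∀ x ∈ L, Z x ∈ L) ∧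
          g = 1 + (algebraMap F E (ϖ ^ k)) • Z) ∧
        ∀ u u' : V, B (g u) (g u') = B u u'} := by
    classical
  set c : E := algebraMap F E (ϖ ^ k) with hcdef
  have hinj : Function.Injective (algebraMap F E) := (algebraMap F E).injective
  have hc0 : c ≠ 0 := by
    rw [hcdef]
    exact (map_ne_zero_iff _ hinj).mpr (pow_ne_zero k hϖ0)
  have hτc : τ c = c := hτF _
  have hvϖ0 : v ϖ ≠ 0 := (Valuation.ne_zero_iff v).mpr hϖ0
  have hwϖ : w (algebraMap F E ϖ) < 1 := by
    rcases lt_or_eq_of_le ((hcompat ϖ).mpr (le_of_lt hϖ1)) with h | h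
    · exact h
    · exfalso
      have h1 : w (algebraMap F E ϖ⁻¹) ≤ 1 := by
        rw [map_inv₀, map_inv₀, h, inv_one]
      have h2 : (v ϖ)⁻¹ ≤ 1 := by
        have := (hcompat ϖ⁻¹).mp h1
        rwa [map_inv₀] at this
      have h3 : (1 : Γ₀) ≤ v ϖ := by
        calc (1 : Γ₀) = v ϖ * (v ϖ)⁻¹ := (mul_inv_cancel₀ hvϖ0).symm
          _ ≤ v ϖ * 1 := mul_le_mul_right h2 _
          _ = v ϖ := mul_one _
      exact absurd hϖ1 (not_lt_of_ge h3)
  have hcw : w c < 1 := by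
    rw [hcdef, map_pow, map_pow]
    calc w (algebraMap F E ϖ) ^ k ≤ w (algebraMap F E ϖ) ^ 1 :=
          pow_le_pow_right_of_le_one' (le_of_lt hwϖ) hk
      _ = w (algebraMap F E ϖ) := pow_one _
      _ < 1 := hwϖ
  have h2E : (2 : E) = algebraMap F E 2 := by rw [map_ofNat]
  have h2F : (2 : F) ≠ 0 := by
    intro h
    rw [h, Valuation.map_zero] at hodd
    exact zero_ne_one hodd
  have h2ne : (2 : E) ≠ 0 := by
    rw [h2E]
    exact (map_ne_zero_iff _ hinj).mpr h2F
  have hw2 : w (2 : E) ≤ 1 := by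
    rw [h2E]
    exact (hcompat 2).mpr (le_of_eq hodd)
  have hw2inv : w ((2 : E)⁻¹) ≤ 1 := by
    rw [h2E, ← map_inv₀]
    refine (hcompat _).mpr ?_
    rw [map_inv₀, hodd, inv_one]
  -- bilinear toolkit
  have hB0l : ∀ b, B 0 b = 0 := by
    intro b
    have h := haddl 0 0 b
    rw [add_zero] at h
    exact (left_eq_add.mp h)
  have haddr : ∀ a b b' : V, B a (b + b') = B a b + B a b' := by
    intro a b b'
    rw [hherm a (b + b'), haddl, map_add, mul_add, ← hherm, ← hherm]
  have hnegl : ∀ a b : V, B (-a) b = - B a b := by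
    intro a b
    have h := haddl a (-a) b
    rw [add_neg_cancel, hB0l] at h
    exact (eq_neg_of_add_eq_zero_right h.symm)
  have hnegr : ∀ a b : V, B a (-b) = - B a b := by
    intro a b
    rw [hherm a (-b), hnegl, map_neg, mul_neg, ← hherm]
  have hsubl : ∀ a b d : V, B (a - b) d = B a d - B b d := by
    intro a b d
    rw [sub_eq_add_neg, haddl, hnegl, sub_eq_add_neg]
  have hsubr : ∀ a b d : V, B a (b - d) = B a b - B a d := by
    intro a b d
    rw [sub_eq_add_neg, haddr, hnegr, sub_eq_add_neg]
  have hsmulr : ∀ (d : E) (a b : V), B a (d • b) = τ d * B a b := by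
    intro d a b
    calc B a (d • b) = ε * τ (d * B b a) := by rw [hherm a (d • b), hsmull]
      _ = ε * (τ d * τ (B b a)) := by rw [map_mul]
      _ = τ d * (ε * τ (B b a)) := by ring
      _ = τ d * B a b := by rw [← hherm]
  have hring : ∀ a b : V →ₗ[E] V, a * b = 1 → b * a = 1 → Ring.inverse a = b := by
    intro a b h1 h2
    have hu : IsUnit a := ⟨⟨a, b, h1, h2⟩, rfl⟩
    calc Ring.inverse a = Ring.inverse a * (a * b) := by rw [h1, mul_one]
      _ = (Ring.inverse a * a) * b := by rw [mul_assoc]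
      _ = b := by rw [Ring.inverse_mul_cancel _ hu, one_mul]
  have hXskew : ∀ Y : V →ₗ[E] V, (∀ u u' : V, B (Y u) u' + B u (Y u') = 0) →
      ∀ a b : V, B ((c • Y) a) b = - B a ((c • Y) b) := by
    intro Y hY a b
    rw [LinearMap.smul_apply, LinearMap.smul_apply, hsmull, hsmulr, hτc,
      eq_neg_of_add_eq_zero_left (hY a b)]
    ring
  constructor
  · -- MapsTo
    intro X hX
    obtain ⟨Y, hYL, hYsk, hXeq⟩ := hX
    obtain ⟨G, hG1, hG2, hGL⟩ := exists_inverse w L hLsmul hLspan s hsL hLfg Y hYL c hcw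
    have hrinv : Ring.inverse (1 + c • Y) = G := hring _ _ hG1 hG2
    simp only [Set.mem_setOf_eq, hXeq, hrinv]
    have hGeq : G = 1 - c • (Y * G) := by
      have h := hG1
      rw [add_mul, one_mul, smul_mul_assoc] at h
      exact eq_sub_of_add_eq h
    constructor
    · refine ⟨(-2 : E) • (Y * G), ?_, ?_⟩
      · intro x hx
        rw [LinearMap.smul_apply, Module.End.mul_apply]
        have hn2 : w (-2 : E) ≤ 1 := by rw [← Valuation.map_neg, neg_neg]; exact hw2
        exact hLsmul _ hn2 _ (hYL _ (hGL x hx))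
      · rw [sub_mul, one_mul]
        nth_rewrite 1 [hGeq]
        rw [smul_mul_assoc]
        module
    · intro u u'
      have hau : (1 + c • Y) (G u) = u := by
        have := DFunLike.congr_fun hG1 u
        rwa [Module.End.mul_apply, Module.End.one_apply] at this
      have hau' : (1 + c • Y) (G u') = u' := by
        have := DFunLike.congr_fun hG1 u'
        rwa [Module.End.mul_apply, Module.End.one_apply] at this
      set a := G u
      set b := G u'
      have h1 : u = a + (c • Y) a := by
        rw [← hau, LinearMap.add_apply, Module.End.one_apply]
      have h1' : u' = b + (c • Y) b := by
        rw [← hau', LinearMap.add_apply, Module.End.one_apply]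
      have h2 : ((1 - c • Y) * G) u = a - (c • Y) a := by
        rw [Module.End.mul_apply, LinearMap.sub_apply, Module.End.one_apply]
      have h2' : ((1 - c • Y) * G) u' = b - (c • Y) b := by
        rw [Module.End.mul_apply, LinearMap.sub_apply, Module.End.one_apply]
      rw [h2, h2']
      conv_rhs => rw [h1, h1']
      rw [hsubl, hsubr, hsubr, haddl, haddr, haddr, hXskew Y hYsk a b]
      ring
  constructor
  · -- InjOn
    intro X₁ h₁ X₂ h₂ heq
    obtain ⟨Y₁, hY₁L, hY₁sk, hX₁eq⟩ := h₁
    obtain ⟨Y₂, hY₂L, hY₂sk, hX₂eq⟩ := h₂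
    obtain ⟨G₁, hG₁1, hG₁2, hG₁L⟩ := exists_inverse w L hLsmul hLspan s hsL hLfg Y₁ hY₁L c hcw
    obtain ⟨G₂, hG₂1, hG₂2, hG₂L⟩ := exists_inverse w L hLsmul hLspan s hsL hLfg Y₂ hY₂L c hcw
    have hr₁ : Ring.inverse (1 + c • Y₁) = G₁ := hring _ _ hG₁1 hG₁2
    have hr₂ : Ring.inverse (1 + c • Y₂) = G₂ := hring _ _ hG₂1 hG₂2
    simp only [hX₁eq, hX₂eq, hr₁, hr₂] at heq
    set g : V →ₗ[E] V := (1 - c • Y₁) * G₁ with hgdef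
    have k₁ : g * (1 + c • Y₁) = 1 - c • Y₁ := by
      rw [hgdef, mul_assoc, hG₁2, mul_one]
    have k₂ : g * (1 + c • Y₂) = 1 - c • Y₂ := by
      rw [heq, mul_assoc, hG₂2, mul_one]
    have hD : g * (c • Y₁ - c • Y₂) = -(c • Y₁ - c • Y₂) := by
      have h := congrArg₂ (fun x y => x - y) k₁ k₂
      rw [← mul_sub] at h
      have e1 : (1 + c • Y₁) - (1 + c • Y₂) = c • Y₁ - c • Y₂ := by abel
      have e2 : (1 - c • Y₁) - (1 - c • Y₂) = -(c • Y₁ - c • Y₂) := by abel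
      rw [e1, e2] at h
      exact h
    have h1pg : (1 : V →ₗ[E] V) + g = (2 : E) • G₁ := by
      calc (1 : V →ₗ[E] V) + g = (1 + c • Y₁) * G₁ + (1 - c • Y₁) * G₁ := by
            rw [hG₁1, hgdef]
        _ = ((1 + c • Y₁) + (1 - c • Y₁)) * G₁ := (add_mul _ _ _).symm
        _ = ((2 : E) • (1 : V →ₗ[E] V)) * G₁ := by
            congr 1
            module
        _ = (2 : E) • G₁ := by rw [smul_mul_assoc, one_mul]
    have hzero : ((2 : E) • G₁) * (c • Y₁ - c • Y₂) = 0 := by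
      rw [← h1pg, add_mul, one_mul, hD]
      abel
    have hGD : G₁ * (c • Y₁ - c • Y₂) = 0 := by
      rw [smul_mul_assoc] at hzero
      exact (smul_eq_zero.mp hzero).resolve_left h2ne
    have hDzero : c • Y₁ - c • Y₂ = 0 := by
      calc c • Y₁ - c • Y₂ = ((1 + c • Y₁) * G₁) * (c • Y₁ - c • Y₂) := by
            rw [hG₁1, one_mul]
        _ = (1 + c • Y₁) * (G₁ * (c • Y₁ - c • Y₂)) := mul_assoc _ _ _
        _ = 0 := by rw [hGD, mul_zero]
    rw [hX₁eq, hX₂eq]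
    exact sub_eq_zero.mp hDzero
  · -- SurjOn
    intro g hg
    obtain ⟨⟨Z, hZL, hgeq⟩, hgiso⟩ := hg
    set A : V →ₗ[E] V := (2 : E)⁻¹ • Z with hAdef
    have hAL : ∀ x ∈ L, A x ∈ L := by
      intro x hx
      rw [hAdef, LinearMap.smul_apply]
      exact hLsmul _ hw2inv _ (hZL x hx)
    obtain ⟨G, hG1, hG2, hGL⟩ := exists_inverse w L hLsmul hLspan s hsL hLfg A hAL c hcw
    have h22 : (2 : E) * (2 : E)⁻¹ = 1 := mul_inv_cancel₀ h2ne
    have h1pg : 1 + g = (2 : E) • (1 + c • A) := by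
      rw [hgeq, hAdef, smul_add, smul_smul, smul_smul]
      have hsc : (2 : E) * c * (2 : E)⁻¹ = c := by
        field_simp
      rw [hsc]
      module
    set H : V →ₗ[E] V := (2 : E)⁻¹ • G with hHdef
    have hHg : (1 + g) * H = 1 := by
      rw [h1pg, hHdef, smul_mul_assoc, mul_smul_comm, smul_smul, hG1, h22, one_smul]
    have hgH : H * (1 + g) = 1 := by
      rw [h1pg, hHdef, smul_mul_assoc, mul_smul_comm, smul_smul, hG2,
        inv_mul_cancel₀ h2ne, one_smul]
    set X : V →ₗ[E] V := (1 - g) * H with hXdef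
    have h1mg : (1 : V →ₗ[E] V) - g = -(c • Z) := by
      rw [hgeq]
      abel
    have hXW : X = c • ((-(2 : E)⁻¹) • (Z * G)) := by
      rw [hXdef, h1mg, hHdef, neg_mul, smul_mul_assoc, mul_smul_comm, smul_smul]
      module
    have hXsk : ∀ a b : V, B (X a) b + B a (X b) = 0 := by
      intro a b
      have hHa : (1 + g) (H a) = a := by
        have := DFunLike.congr_fun hHg a
        rwa [Module.End.mul_apply, Module.End.one_apply] at this
      have hHb : (1 + g) (H b) = b := by
        have := DFunLike.congr_fun hHg b
        rwa [Module.End.mul_apply, Module.End.one_apply] at this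
      set α := H a
      set β := H b
      have ha : a = α + g α := by rw [← hHa, LinearMap.add_apply, Module.End.one_apply]
      have hb : b = β + g β := by rw [← hHb, LinearMap.add_apply, Module.End.one_apply]
      have hXa : X a = α - g α := by
        rw [hXdef, Module.End.mul_apply, LinearMap.sub_apply, Module.End.one_apply]
      have hXb : X b = β - g β := by
        rw [hXdef, Module.End.mul_apply, LinearMap.sub_apply, Module.End.one_apply]
      rw [hXa, hXb]
      conv_lhs => rw [hb, ha]
      simp only [hsubl, hsubr, haddl, haddr]
      rw [hgiso α β]
      ring
    refine ⟨X, ⟨(-(2 : E)⁻¹) • (Z * G), ?_, ?_, hXW⟩, ?_⟩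
    · intro x hx
      rw [LinearMap.smul_apply, Module.End.mul_apply]
      have hn : w (-(2 : E)⁻¹) ≤ 1 := by rw [Valuation.map_neg]; exact hw2inv
      exact hLsmul _ hn _ (hZL _ (hGL x hx))
    · intro u u'
      have h := hXsk u u'
      rw [hXW] at h
      simp only [LinearMap.smul_apply] at h
      rw [hsmull, hsmulr, hτc, ← mul_add] at h
      simp only [LinearMap.smul_apply]
      exact (mul_eq_zero.mp h).resolve_left hc0
    · -- f X = g
      have h1X : 1 + X = G := by
        calc (1 : V →ₗ[E] V) + X = (1 + g) * H + (1 - g) * H := by rw [hHg, hXdef]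
          _ = ((1 + g) + (1 - g)) * H := (add_mul _ _ _).symm
          _ = ((2 : E) • (1 : V →ₗ[E] V)) * H := by congr 1; module
          _ = (2 : E) • H := by rw [smul_mul_assoc, one_mul]
          _ = G := by rw [hHdef, smul_smul, h22, one_smul]
      have hrX : Ring.inverse (1 + X) = 1 + c • A := by
        rw [h1X]
        exact hring _ _ hG2 hG1
      have h1mX : 1 - X = ((2 : E) • g) * H := by
        calc (1 : V →ₗ[E] V) - X = (1 + g) * H - (1 - g) * H := by rw [hHg, hXdef]
          _ = ((1 + g) - (1 - g)) * H := (sub_mul _ _ _).symm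
          _ = ((2 : E) • g) * H := by congr 1; module
      show (1 - X) * Ring.inverse (1 + X) = g
      rw [hrX, h1mX, mul_assoc]
      have hH1 : H * (1 + c • A) = (2 : E)⁻¹ • (1 : V →ₗ[E] V) := by
        rw [hHdef, smul_mul_assoc, hG2]
      rw [hH1, mul_smul_comm, mul_one, smul_smul, inv_mul_cancel₀ h2ne, one_smul]
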